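/- arXiv:2001.10466 — 3 statements merged into one kernel-verified Lean document; each statement's English description precedes it below -/
import Mathlib

section
/- Scaling limit of Charlier polynomials: for fixed ζ ∈ ℝ, ℓ ∈ ℤ, and ε > 0, lim_{L→∞} π_{L+ℓ}(L + ζ; 1/(Lε²)) / Γ(L + ζ + 1/2) = ε^{ζ−ℓ−1/2} J_{ζ−ℓ−1/2}(2/ε), where J_ν is the Bessel function of the first kind. -/
open Finset Filter
open Topology

lemma charlier_aux (B Γy G F C : ℝ) (hΓy : Γy ≠ 0) (hF : F ≠ 0) (m j : ℕ) :
    (-(1/B))^m * (F * C * (1/G * Γy) / F * (-1/(1/B))^j) / Γy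
      = (-1)^m * (-1)^j * ((1/B)^m / (1/B)^j) * C / G := by
  rw [mul_assoc F C, mul_div_cancel_left₀ _ hF]
  have h1 : (-(1/B) : ℝ)^m * (C * (1/G * Γy) * (-1/(1/B))^j) / Γy
      = (-(1/B) : ℝ)^m * (C * (1/G) * (-1/(1/B))^j) * (Γy / Γy) := by ring
  rw [h1, div_self hΓy, mul_one]
  field_simp
  ring_nf; simp only [inv_inv]; ring

lemma ascPochhammer_eval_prod (x : ℝ) (n : ℕ) :
    (ascPochhammer ℝ n).eval x = ∏ i ∈ Finset.range n, (x + i) := by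
  induction n with
  | zero => simp
  | succ n ih => rw [ascPochhammer_succ_eval, ih, Finset.prod_range_succ]

lemma one_div_gamma_shift (t : ℝ) (j : ℕ) :
    (∏ i ∈ Finset.range j, (t + i)) / Real.Gamma (t + j) = 1 / Real.Gamma t := by
  induction j with
  | zero => simp
  | succ j ih =>
    rcases eq_or_ne (t + j) 0 with h | h
    · rw [Finset.prod_range_succ, h, mul_zero, zero_div]
      have ht : t = -(j : ℝ) := by linarith
      rw [ht, Real.Gamma_neg_nat_eq_zero, div_zero]
    · have e : t + ((j + 1 : ℕ) : ℝ) = (t + j) + 1 := by push_cast; ring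
      rw [Finset.prod_range_succ, e, Real.Gamma_add_one h,
        mul_comm (t + (j : ℝ)) (Real.Gamma (t + j)), ← ih,
        mul_div_mul_right _ _ h]

lemma gamma_nat_shift {t : ℝ} (ht : 0 < t) (j : ℕ) :
    Real.Gamma (t + j) = (∏ i ∈ Finset.range j, (t + i)) * Real.Gamma t := by
  induction j with
  | zero => simp
  | succ j ih =>
    have h : t + (j : ℝ) ≠ 0 := by positivity
    have e : t + ((j + 1 : ℕ) : ℝ) = (t + j) + 1 := by push_cast; ring
    rw [e, Real.Gamma_add_one h, ih, Finset.prod_range_succ]; ring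

lemma cast_descFactorial_prod (m k : ℕ) (h : k ≤ m) :
    ((m.descFactorial k : ℕ) : ℝ) = ∏ i ∈ Finset.range k, ((m : ℝ) - i) := by
  rw [Nat.descFactorial_eq_prod_range, Nat.cast_prod]
  refine Finset.prod_congr rfl fun i hi => ?_
  have : i ≤ m := le_trans (Nat.le_of_lt (Finset.mem_range.mp hi)) h
  push_cast [Nat.cast_sub this]
  ring

lemma cast_factorial_prod (j : ℕ) : ((j.factorial : ℕ) : ℝ) = ∏ i ∈ Finset.range j, ((i : ℝ) + 1) := by
  induction j with
  | zero => simp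
  | succ j ih => rw [Nat.factorial_succ, Finset.prod_range_succ, ← ih]; push_cast; ring

/-- Bessel function of the first kind `J_ν(ζ)`, defined by its power series. -/
noncomputable def besselJ (ν : ℂ) (ζ : ℝ) : ℂ :=
  ∑' k : ℕ, (-1) ^ k * ((ζ : ℂ) / 2) ^ (ν + 2 * (k : ℂ)) /
    ((k.factorial : ℂ) * Complex.Gamma (ν + (k : ℂ) + 1))

/-- The monic scaled Charlier polynomial
`π_m(x; a) = (−a)^m · ₂F₀(−m, 1/2 − x;; −1/a)`. -/
noncomputable def charlierPoly (m : ℕ) (x a : ℝ) : ℝ :=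
  (-a) ^ m * ∑ j ∈ Finset.range (m + 1),
    (ascPochhammer ℝ j).eval (-(m : ℝ)) * (ascPochhammer ℝ j).eval (1 / 2 - x)
      / (j.factorial : ℝ) * (-1 / a) ^ j

/-- Scaling limit of Charlier polynomials:
`lim_{L→∞} π_{L+ℓ}(L + ζ; 1/(Lε²)) / Γ(L + ζ + 1/2) = ε^{ζ−ℓ−1/2} J_{ζ−ℓ−1/2}(2/ε)`. -/
theorem charlier_scaling_limit (ζ : ℝ) (ℓ : ℤ) (ε : ℝ) (hε : 0 < ε) :
    Tendsto
      (fun L : ℕ =>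
        ((charlierPoly ((L : ℤ) + ℓ).toNat ((L : ℝ) + ζ) (1 / ((L : ℝ) * ε ^ 2)) /
          Real.Gamma ((L : ℝ) + ζ + 1 / 2) : ℝ) : ℂ))
      atTop
      (nhds ((Real.rpow ε (ζ - (ℓ : ℝ) - 1 / 2) : ℂ) *
        besselJ ((ζ : ℂ) - (ℓ : ℂ) - 1 / 2) (2 / ε))) := by
  set ν : ℝ := ζ - (ℓ : ℝ) - 1 / 2 with hν
  set c : ℕ → ℝ := fun k =>
    (-1) ^ k * (1 / ε ^ 2) ^ k / (k.factorial * Real.Gamma (ν + 1 + k)) with hc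
  set f : ℕ → ℕ → ℝ := fun L k =>
    (-1) ^ k * (1 / ((L : ℝ) * ε ^ 2)) ^ k * (((L : ℤ) + ℓ).toNat.choose k) /
      Real.Gamma (ν + 1 + k) with hf
  -- pointwise limits
  have hpt : ∀ k, Tendsto (fun L : ℕ => f L k) atTop (𝓝 (c k)) := by
    intro k
    have hprod : Tendsto (fun L : ℕ => ∏ i ∈ Finset.range k,
        (((L : ℝ) + (ℓ : ℝ) - i) / ((L : ℝ) * ε ^ 2))) atTop (𝓝 ((1 / ε ^ 2) ^ k)) := by
      have h1 : ((1 / ε ^ 2 : ℝ)) ^ k = ∏ _i ∈ Finset.range k, (1 / ε ^ 2 : ℝ) := by simp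
      rw [h1]
      refine tendsto_finset_prod _ fun i _ => ?_
      have h2 : Tendsto (fun L : ℕ => 1 / ε ^ 2 + (((ℓ : ℝ) - i) / ε ^ 2) / (L : ℝ))
          atTop (𝓝 (1 / ε ^ 2)) := by
        simpa using tendsto_const_nhds.add
          (tendsto_const_div_atTop_nhds_zero_nat (((ℓ : ℝ) - i) / ε ^ 2))
      refine h2.congr' ?_
      filter_upwards [eventually_ge_atTop 1] with L hL
      have hL0 : (L : ℝ) ≠ 0 := by
        have : (0 : ℕ) < L := hL
        positivity
      have hε2 : (ε : ℝ) ^ 2 ≠ 0 := by positivity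
      field_simp
      ring
    have heq : ∀ᶠ L : ℕ in atTop, ((-1 : ℝ) ^ k / (k.factorial * Real.Gamma (ν + 1 + k))) *
        ∏ i ∈ Finset.range k, (((L : ℝ) + (ℓ : ℝ) - i) / ((L : ℝ) * ε ^ 2)) = f L k := by
      filter_upwards [eventually_ge_atTop (k + ℓ.natAbs + 1)] with L hL
      have hkm : k ≤ ((L : ℤ) + ℓ).toNat := by omega
      set m := ((L : ℤ) + ℓ).toNat with hm
      have hm0 : ((L : ℤ) + ℓ) = (m : ℤ) := by omega
      have hmr : (m : ℝ) = (L : ℝ) + (ℓ : ℝ) := by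
        have := congrArg (Int.cast : ℤ → ℝ) hm0
        push_cast at this
        linarith
      have hdesc : ((m.descFactorial k : ℕ) : ℝ) = ∏ i ∈ Finset.range k, ((L : ℝ) + (ℓ : ℝ) - i) := by
        rw [cast_descFactorial_prod m k hkm]
        exact Finset.prod_congr rfl fun i _ => by rw [hmr]
      have hchoose : (k.factorial : ℝ) * (m.choose k : ℝ) =
          ∏ i ∈ Finset.range k, ((L : ℝ) + (ℓ : ℝ) - i) := by
        rw [← hdesc]
        push_cast [Nat.descFactorial_eq_factorial_mul_choose]
        ring
      have hL0 : (L : ℝ) ≠ 0 := by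
        have : (0 : ℕ) < L := by omega
        positivity
      have hε2 : (ε : ℝ) ^ 2 ≠ 0 := by positivity
      have hkf : (k.factorial : ℝ) ≠ 0 := by positivity
      simp only [hf]
      rw [Finset.prod_div_distrib, Finset.prod_const, Finset.card_range, ← hchoose]
      rcases eq_or_ne (Real.Gamma (ν + 1 + k)) 0 with hg | hg
      · simp [hg]
      · rw [← hm]
        field_simp
        ring_nf
        have hε0 : ε ≠ 0 := hε.ne'
        have hx : (L : ℝ) ^ k * ε ^ (k * 2) * (L : ℝ)⁻¹ ^ k * ε⁻¹ ^ (k * 2) = 1 := by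
          rw [inv_pow, inv_pow, mul_right_comm ((L : ℝ) ^ k), mul_inv_cancel₀ (pow_ne_zero _ hL0),
            one_mul, mul_inv_cancel₀ (pow_ne_zero _ hε0)]
        linear_combination (-(m.choose k : ℝ)) * hx
    have hck : c k = ((-1 : ℝ) ^ k / (k.factorial * Real.Gamma (ν + 1 + k))) * (1 / ε ^ 2) ^ k := by
      simp only [hc]
      rw [div_mul_eq_mul_div]
    rw [hck]
    exact Tendsto.congr' heq (hprod.const_mul _)
  -- dominating bound
  set D : ℝ := 1 + ℓ.natAbs with hD
  set bound : ℕ → ℝ := fun k =>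
    (D / ε ^ 2) ^ k / (k.factorial * |Real.Gamma (ν + 1 + k)|) with hbound_def
  have hsum : Summable bound := by
    have hD1 : (1 : ℝ) ≤ D := by
      have : (0:ℝ) ≤ (ℓ.natAbs : ℝ) := Nat.cast_nonneg _
      simp only [hD]; linarith
    have hq : (0 : ℝ) < D / ε ^ 2 := by positivity
    set q : ℝ := D / ε ^ 2 with hq'
    set k₀ : ℕ := ⌈-ν⌉₊ with hk₀
    have hceil : -ν ≤ (k₀ : ℝ) := Nat.le_ceil (-ν)
    set t₀ : ℝ := ν + 1 + k₀ with ht₀'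
    have ht₀ : (1 : ℝ) ≤ t₀ := by simp only [ht₀']; linarith
    have ht₀pos : 0 < t₀ := by linarith
    have hΓ : 0 < Real.Gamma t₀ := Real.Gamma_pos_of_pos ht₀pos
    rw [← summable_nat_add_iff k₀]
    refine Summable.of_nonneg_of_le (fun j => ?_) (fun j => ?_)
      ((Real.summable_pow_div_factorial q).mul_left (q ^ k₀ / Real.Gamma t₀))
    · simp only [hbound_def]
      apply div_nonneg (pow_nonneg hq.le _) (by positivity)
    · have hΓj : 0 < Real.Gamma (t₀ + j) := Real.Gamma_pos_of_pos (by positivity)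
      have hgam : Real.Gamma (ν + 1 + ((j + k₀ : ℕ) : ℝ)) = Real.Gamma (t₀ + j) := by
        congr 1; simp only [ht₀']; push_cast; ring
      have hfac1 : (1 : ℝ) ≤ ((j + k₀).factorial : ℝ) := by
        exact_mod_cast Nat.one_le_iff_ne_zero.mpr (j + k₀).factorial_ne_zero
      have hge : (j.factorial : ℝ) * Real.Gamma t₀ ≤ Real.Gamma (t₀ + j) := by
        rw [gamma_nat_shift ht₀pos j]
        have hp : (j.factorial : ℝ) ≤ ∏ i ∈ Finset.range j, (t₀ + i) := by
          rw [cast_factorial_prod]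
          refine Finset.prod_le_prod (fun i _ => by positivity) (fun i _ => by linarith)
        exact mul_le_mul_of_nonneg_right hp hΓ.le
      calc bound (j + k₀) = q ^ (j + k₀) / (((j + k₀).factorial : ℝ) * Real.Gamma (t₀ + j)) := by
            simp only [hbound_def]
            rw [hgam, abs_of_pos hΓj]
        _ ≤ q ^ (j + k₀) / ((j.factorial : ℝ) * Real.Gamma t₀) := by
            apply div_le_div_of_nonneg_left (by positivity) (by positivity)
            calc (j.factorial : ℝ) * Real.Gamma t₀ ≤ Real.Gamma (t₀ + j) := hge
              _ ≤ ((j + k₀).factorial : ℝ) * Real.Gamma (t₀ + j) :=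
                  le_mul_of_one_le_left hΓj.le hfac1
        _ = (q ^ k₀ / Real.Gamma t₀) * (q ^ j / (j.factorial : ℝ)) := by
            rw [pow_add]
            have : (j.factorial : ℝ) ≠ 0 := by positivity
            field_simp
  have hbound : ∀ᶠ L : ℕ in atTop, ∀ k, ‖f L k‖ ≤ bound k := by
    filter_upwards [eventually_ge_atTop 1] with L hL
    intro k
    have hL0 : (0 : ℝ) < (L : ℝ) := by exact_mod_cast hL
    set m := ((L : ℤ) + ℓ).toNat with hm
    have h1 : ‖f L k‖ = (1 / ((L : ℝ) * ε ^ 2)) ^ k * (m.choose k : ℝ) /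
        |Real.Gamma (ν + 1 + k)| := by
      have hpos : (0 : ℝ) ≤ 1 / ((L : ℝ) * ε ^ 2) := by positivity
      simp only [hf, Real.norm_eq_abs, abs_div, abs_mul, abs_pow, abs_neg, abs_one,
        one_pow, one_mul, abs_of_nonneg hpos, Nat.abs_cast]
      rfl
    have hmk : (m : ℝ) ≤ D * L := by
      have h2 : (m : ℤ) ≤ (L : ℤ) + ℓ.natAbs := by omega
      have h3 : (m : ℝ) ≤ (L : ℝ) + (ℓ.natAbs : ℝ) := by exact_mod_cast h2
      have h4 : (ℓ.natAbs : ℝ) ≤ (ℓ.natAbs : ℝ) * L :=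
        le_mul_of_one_le_right (Nat.cast_nonneg _) (by exact_mod_cast hL)
      simp only [hD]; nlinarith
    have key : (m.choose k : ℝ) * (k.factorial : ℝ) ≤ (D * L) ^ k := by
      calc (m.choose k : ℝ) * (k.factorial : ℝ) = ((m.descFactorial k : ℕ) : ℝ) := by
            rw [Nat.descFactorial_eq_factorial_mul_choose]; push_cast; ring
        _ ≤ ((m : ℝ)) ^ k := by exact_mod_cast Nat.descFactorial_le_pow m k
        _ ≤ (D * L) ^ k := pow_le_pow_left₀ (Nat.cast_nonneg m) hmk k
    have hfac : (0 : ℝ) < (k.factorial : ℝ) := by positivity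
    have hB : (0 : ℝ) < ((L : ℝ) * ε ^ 2) ^ k := by positivity
    have hnum : (1 / ((L : ℝ) * ε ^ 2)) ^ k * (m.choose k : ℝ) ≤
        (D / ε ^ 2) ^ k / (k.factorial : ℝ) := by
      have e1 : ((1 : ℝ) / ((L : ℝ) * ε ^ 2)) ^ k * (m.choose k : ℝ) =
          (m.choose k : ℝ) / ((L : ℝ) * ε ^ 2) ^ k := by
        rw [div_pow, one_pow]; ring
      rw [e1, div_le_div_iff₀ hB hfac]
      calc (m.choose k : ℝ) * (k.factorial : ℝ) ≤ (D * L) ^ k := key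
        _ = (D / ε ^ 2) ^ k * ((L : ℝ) * ε ^ 2) ^ k := by
            rw [← mul_pow]; congr 1
            have : (ε : ℝ) ^ 2 ≠ 0 := by positivity
            field_simp
    rw [h1]
    simp only [hbound_def]
    rw [div_div ((D / ε ^ 2) ^ k) (k.factorial : ℝ) _ |>.symm]
    rcases eq_or_ne (|Real.Gamma (ν + 1 + k)| : ℝ) 0 with hg | hg
    · rw [hg, div_zero, div_zero]
    · have hgpos : 0 < |Real.Gamma (ν + 1 + k)| := lt_of_le_of_ne (abs_nonneg _) (Ne.symm hg)
      gcongr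
  have hreal0 : Tendsto (fun L : ℕ => ∑' k, f L k) atTop (𝓝 (∑' k, c k)) :=
    tendsto_tsum_of_dominated_convergence hsum hpt hbound
  -- identification of the prelimit with the tsum
  have hEq : (fun L : ℕ =>
      charlierPoly ((L : ℤ) + ℓ).toNat ((L : ℝ) + ζ) (1 / ((L : ℝ) * ε ^ 2)) /
        Real.Gamma ((L : ℝ) + ζ + 1 / 2)) =ᶠ[atTop] (fun L => ∑' k, f L k) := by
    filter_upwards [eventually_ge_atTop (ℓ.natAbs + ⌈|ζ|⌉₊ + 1)] with L hL
    have hL1 : 1 ≤ L := by omega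
    have hLpos : (0 : ℝ) < (L : ℝ) := by exact_mod_cast hL1
    set m := ((L : ℤ) + ℓ).toNat with hm
    have hm0 : ((L : ℤ) + ℓ) = (m : ℤ) := by omega
    have hmr : (m : ℝ) = (L : ℝ) + (ℓ : ℝ) := by
      have := congrArg (Int.cast : ℤ → ℝ) hm0
      push_cast at this
      linarith
    have hζc : |ζ| ≤ (⌈|ζ|⌉₊ : ℝ) := Nat.le_ceil _
    have hLR : (ℓ.natAbs : ℝ) + (⌈|ζ|⌉₊ : ℝ) + 1 ≤ (L : ℝ) := by exact_mod_cast hL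
    have hy : (0 : ℝ) < (L : ℝ) + ζ + 1 / 2 := by
      have h1 := neg_abs_le ζ
      have h2 : (0 : ℝ) ≤ (ℓ.natAbs : ℝ) := Nat.cast_nonneg _
      linarith
    have hΓy : 0 < Real.Gamma ((L : ℝ) + ζ + 1 / 2) := Real.Gamma_pos_of_pos hy
    have hB0 : ((L : ℝ) * ε ^ 2) ≠ 0 := by positivity
    have htsum : ∑' k, f L k = ∑ k ∈ Finset.range (m + 1), f L k := by
      apply tsum_eq_sum
      intro k hk
      have hmk : m < k := by
        by_contra h
        exact hk (Finset.mem_range.mpr (by omega))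
      simp only [hf]
      rw [Nat.choose_eq_zero_of_lt hmk]
      simp
    rw [htsum, ← Finset.sum_range_reflect (fun k => f L k) (m + 1)]
    simp only [charlierPoly]
    rw [Finset.mul_sum, Finset.sum_div]
    refine Finset.sum_congr rfl fun j hj => ?_
    have hjm : j ≤ m := Nat.lt_succ_iff.mp (Finset.mem_range.mp hj)
    simp only [hf, Nat.add_sub_cancel]
    have hP1 : (ascPochhammer ℝ j).eval (-(m : ℝ)) =
        (-1) ^ j * ((j.factorial : ℝ) * (m.choose j : ℝ)) := by
      rw [ascPochhammer_eval_prod]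
      have h1 : ∏ i ∈ Finset.range j, (-(m : ℝ) + i) =
          (-1) ^ j * ∏ i ∈ Finset.range j, ((m : ℝ) - i) := by
        calc ∏ i ∈ Finset.range j, (-(m : ℝ) + i)
            = ∏ i ∈ Finset.range j, ((-1) * ((m : ℝ) - i)) :=
              Finset.prod_congr rfl fun i _ => by ring
          _ = _ := by rw [Finset.prod_mul_distrib, Finset.prod_const, Finset.card_range]
      rw [h1, ← cast_descFactorial_prod m j hjm, Nat.descFactorial_eq_factorial_mul_choose]
      push_cast; ring
    have hP2 : (ascPochhammer ℝ j).eval (1 / 2 - ((L : ℝ) + ζ)) =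
        (-1) ^ j * ∏ i ∈ Finset.range j, ((L : ℝ) + ζ + 1 / 2 - j + i) := by
      rw [ascPochhammer_eval_prod]
      have h1 : ∏ i ∈ Finset.range j, (1 / 2 - ((L : ℝ) + ζ) + i) =
          (-1) ^ j * ∏ i ∈ Finset.range j, ((L : ℝ) + ζ + 1 / 2 - 1 - i) := by
        calc ∏ i ∈ Finset.range j, (1 / 2 - ((L : ℝ) + ζ) + i)
            = ∏ i ∈ Finset.range j, ((-1) * ((L : ℝ) + ζ + 1 / 2 - 1 - i)) :=
              Finset.prod_congr rfl fun i _ => by ring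
          _ = _ := by rw [Finset.prod_mul_distrib, Finset.prod_const, Finset.card_range]
      rw [h1]
      congr 1
      rw [← Finset.prod_range_reflect (fun i => (L : ℝ) + ζ + 1 / 2 - j + i) j]
      refine Finset.prod_congr rfl fun i hi => ?_
      have hij : i < j := Finset.mem_range.mp hi
      have h3 : ((j - 1 - i : ℕ) : ℝ) = (j : ℝ) - 1 - i := by
        rw [Nat.cast_sub (by omega : i ≤ j - 1), Nat.cast_sub (by omega : 1 ≤ j), Nat.cast_one]
      rw [h3]
      ring
    have hP12 : (ascPochhammer ℝ j).eval (-(m : ℝ)) *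
        (ascPochhammer ℝ j).eval (1 / 2 - ((L : ℝ) + ζ)) =
        (j.factorial : ℝ) * (m.choose j : ℝ) *
          ∏ i ∈ Finset.range j, ((L : ℝ) + ζ + 1 / 2 - j + i) := by
      rw [hP1, hP2,
        show ∀ A B : ℝ, (-1 : ℝ) ^ j * A * ((-1) ^ j * B) = ((-1) * (-1)) ^ j * (A * B) from
          fun A B => by rw [mul_pow]; ring]
      norm_num
    have hsh := one_div_gamma_shift ((L : ℝ) + ζ + 1 / 2 - j) j
    rw [show (L : ℝ) + ζ + 1 / 2 - j + j = (L : ℝ) + ζ + 1 / 2 from by ring] at hsh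
    have hprodP : ∏ i ∈ Finset.range j, ((L : ℝ) + ζ + 1 / 2 - j + i) =
        1 / Real.Gamma ((L : ℝ) + ζ + 1 / 2 - j) * Real.Gamma ((L : ℝ) + ζ + 1 / 2) :=
      (div_eq_iff hΓy.ne').mp hsh
    have hsign : ((-1 : ℝ)) ^ (m - j) = (-1) ^ m * (-1) ^ j := by
      have h4 : ((-1 : ℝ)) ^ (m - j) * (-1) ^ j = (-1) ^ m := by
        rw [← pow_add, Nat.sub_add_cancel hjm]
      calc ((-1 : ℝ)) ^ (m - j) = (-1) ^ (m - j) * ((-1) ^ j * (-1) ^ j) := by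
            rw [← mul_pow]; norm_num
        _ = (-1) ^ m * (-1) ^ j := by rw [← mul_assoc, h4]
    have hpow : (1 / ((L : ℝ) * ε ^ 2)) ^ (m - j) =
        (1 / ((L : ℝ) * ε ^ 2)) ^ m / (1 / ((L : ℝ) * ε ^ 2)) ^ j :=
      pow_sub₀ _ (by positivity) hjm
    rw [Nat.choose_symm hjm, Nat.cast_sub hjm,
      show ν + 1 + ((m : ℝ) - (j : ℝ)) = (L : ℝ) + ζ + 1 / 2 - j from by
        rw [hν, hmr]; ring,
      hsign, hpow, hP12, hprodP]
    have hjf : (j.factorial : ℝ) ≠ 0 := by positivity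
    exact charlier_aux _ _ _ _ _ hΓy.ne' hjf m j
  have hreal : Tendsto
      (fun L : ℕ => charlierPoly ((L : ℤ) + ℓ).toNat ((L : ℝ) + ζ) (1 / ((L : ℝ) * ε ^ 2)) /
        Real.Gamma ((L : ℝ) + ζ + 1 / 2)) atTop (𝓝 (∑' k, c k)) :=
    hreal0.congr' hEq.symm
  -- identification of the limit
  have hA : ((Real.rpow ε ν : ℝ) : ℂ) * besselJ ((ζ : ℂ) - (ℓ : ℂ) - 1 / 2) (2 / ε) =
      (((∑' k, c k : ℝ) : ℂ)) := by
    have hν' : ((ζ : ℂ) - (ℓ : ℂ) - 1 / 2) = ((ν : ℝ) : ℂ) := by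
      rw [hν]; push_cast; ring
    have hterm : ∀ k : ℕ,
        ((Real.rpow ε ν : ℝ) : ℂ) *
          ((-1) ^ k * (((2 / ε : ℝ) : ℂ) / 2) ^ (((ν : ℝ) : ℂ) + 2 * (k : ℂ)) /
            ((k.factorial : ℂ) * Complex.Gamma (((ν : ℝ) : ℂ) + (k : ℂ) + 1))) = ((c k : ℝ) : ℂ) := by
      intro k
      have h1 : (((2 / ε : ℝ) : ℂ)) / 2 = (((1 / ε : ℝ)) : ℂ) := by push_cast; ring
      have h2 : ((ν : ℝ) : ℂ) + 2 * (k : ℂ) = (((ν + 2 * (k : ℝ) : ℝ)) : ℂ) := by push_cast; ring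
      have h3 : ((ν : ℝ) : ℂ) + (k : ℂ) + 1 = (((ν + 1 + (k : ℝ) : ℝ)) : ℂ) := by push_cast; ring
      have h4 : ((-1 : ℂ)) ^ k = (((-1 : ℝ) ^ k : ℝ) : ℂ) := by push_cast; ring
      have h5 : ((k.factorial : ℂ)) = (((k.factorial : ℝ)) : ℂ) := by push_cast; ring
      rw [h1, h2, h3, h4, h5, ← Complex.ofReal_cpow (by positivity : (0 : ℝ) ≤ 1 / ε),
        Complex.Gamma_ofReal, ← Complex.ofReal_mul, ← Complex.ofReal_mul, ← Complex.ofReal_div,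
        ← Complex.ofReal_mul]
      congr 1
      have hkey : Real.rpow ε ν * (1 / ε) ^ (ν + 2 * (k : ℝ)) = (1 / ε ^ 2) ^ k := by
        have h2k : ((2 * k : ℕ) : ℝ) = 2 * (k : ℝ) := by push_cast; ring
        have hν0 : ε ^ ν ≠ 0 := (Real.rpow_pos_of_pos hε ν).ne'
        rw [show Real.rpow ε ν = ε ^ ν from rfl, one_div, Real.inv_rpow hε.le,
          Real.rpow_add hε, ← h2k, Real.rpow_natCast, mul_inv, ← mul_assoc,
          mul_inv_cancel₀ hν0, one_mul, pow_mul, one_div, inv_pow]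
      simp only [hc]
      rw [mul_div_assoc', ← mul_assoc, mul_comm (Real.rpow ε ν) ((-1 : ℝ) ^ k), mul_assoc, hkey]
    rw [hν', besselJ, ← tsum_mul_left, Complex.ofReal_tsum]
    exact tsum_congr hterm
  rw [hA]
  exact (Complex.continuous_ofReal.tendsto _).comp hreal
end

section
/- Expectation of products of characteristic polynomials in an orthogonal polynomial ensemble: for the probability measure on ℝ^L proportional to Δ²(x₁,...,x_L) dμ(x₁)···dμ(x_L), the expectation of ∏_{i=1}^N ∏_{j=1}^L (u_i − x_j) equals det(π_{L+k−1}(u_j))_{j,k=1}^N / Δ(u₁,...,u_N), where π_m are the monic orthogonal polynomials for μ. -/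
open MeasureTheory Finset

namespace CharPolyAux



lemma prod_Ioi_eq_prod_ite {n : ℕ} {M : Type*} [CommMonoid M] (j : Fin n) (f : Fin n → M) :
    ∏ k ∈ Finset.Ioi j, f k = ∏ k : Fin n, if j < k then f k else 1 := by
  rw [← Finset.prod_filter]
  congr 1
  ext k
  simp

lemma vandermonde_split (L N : ℕ) (v : Fin L → ℂ) (w : Fin N → ℂ) :
    (∏ j : Fin (L + N), ∏ k ∈ Finset.Ioi j,
        (Fin.append v w k - Fin.append v w j))
      = (∏ j : Fin L, ∏ k ∈ Finset.Ioi j, (v k - v j))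
        * (∏ j : Fin N, ∏ k ∈ Finset.Ioi j, (w k - w j))
        * ∏ i : Fin N, ∏ j : Fin L, (w i - v j) := by
  simp only [prod_Ioi_eq_prod_ite]
  rw [Fin.prod_univ_add]
  have h1 : ∀ j : Fin L,
      (∏ k : Fin (L + N), if Fin.castAdd N j < k then
          Fin.append v w k - Fin.append v w (Fin.castAdd N j) else 1)
      = (∏ k : Fin L, if j < k then v k - v j else 1) * ∏ i : Fin N, (w i - v j) := by
    intro j
    rw [Fin.prod_univ_add]
    congr 1
    · refine Finset.prod_congr rfl fun k _ => ?_
      have : (Fin.castAdd N j < Fin.castAdd N k) ↔ j < k := by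
        simp only [Fin.lt_def, Fin.coe_castAdd]
      rw [Fin.append_left, Fin.append_left]
      by_cases h : j < k
      · rw [if_pos (this.mpr h), if_pos h]
      · rw [if_neg (fun hh => h (this.mp hh)), if_neg h]
    · refine Finset.prod_congr rfl fun i _ => ?_
      rw [Fin.append_right, Fin.append_left,
        if_pos (by simp only [Fin.lt_def, Fin.coe_castAdd, Fin.coe_natAdd]; omega : Fin.castAdd N j < Fin.natAdd L i)]
  have h2 : ∀ i : Fin N,
      (∏ k : Fin (L + N), if Fin.natAdd L i < k then
          Fin.append v w k - Fin.append v w (Fin.natAdd L i) else 1)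
      = ∏ i' : Fin N, if i < i' then w i' - w i else 1 := by
    intro i
    rw [Fin.prod_univ_add]
    have e1 : (∏ k : Fin L, if Fin.natAdd L i < Fin.castAdd N k then
        Fin.append v w (Fin.castAdd N k) - Fin.append v w (Fin.natAdd L i) else 1) = 1 := by
      refine Finset.prod_eq_one fun k _ => ?_
      rw [if_neg]
      simp only [Fin.lt_def, Fin.coe_natAdd, Fin.coe_castAdd]
      omega
    rw [e1, one_mul]
    refine Finset.prod_congr rfl fun i' _ => ?_
    have : (Fin.natAdd L i < Fin.natAdd L i') ↔ i < i' := by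
      simp only [Fin.lt_def, Fin.coe_natAdd]
      omega
    rw [Fin.append_right, Fin.append_right]
    by_cases h : i < i'
    · rw [if_pos (this.mpr h), if_pos h]
    · rw [if_neg (fun hh => h (this.mp hh)), if_neg h]
  rw [Finset.prod_congr rfl fun j _ => h1 j, Finset.prod_congr rfl fun i _ => h2 i,
    Finset.prod_mul_distrib]
  rw [Finset.prod_comm (s := Finset.univ) (t := Finset.univ)
    (f := fun j i => w i - v j)]
  ring





lemma key_sum0 (L : ℕ) (c : ℕ → ℕ → ℝ) (hc : ∀ m m', m ≠ m' → c m m' = 0) :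
    (∑ τ : Equiv.Perm (Fin L), ∑ σ : Equiv.Perm (Fin L),
      ((Equiv.Perm.sign τ : ℤ) : ℝ) * ((Equiv.Perm.sign σ : ℤ) : ℝ)
        * ∏ j : Fin L, c (τ j) (σ j))
    = (L.factorial : ℝ) * ∏ j : Fin L, c (j : ℕ) (j : ℕ) := by
  have h1 : ∀ τ : Equiv.Perm (Fin L),
      (∑ σ : Equiv.Perm (Fin L),
        ((Equiv.Perm.sign τ : ℤ) : ℝ) * ((Equiv.Perm.sign σ : ℤ) : ℝ)
          * ∏ j : Fin L, c (τ j) (σ j)) = ∏ j : Fin L, c (j : ℕ) (j : ℕ) := by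
    intro τ
    rw [Finset.sum_eq_single τ]
    · have hs : ((Equiv.Perm.sign τ : ℤ) : ℝ) * ((Equiv.Perm.sign τ : ℤ) : ℝ) = 1 := by
        rcases Int.units_eq_one_or (Equiv.Perm.sign τ) with h | h <;> rw [h] <;> norm_num
      rw [hs, one_mul, ← Equiv.prod_comp τ (fun m : Fin L => c (m : ℕ) (m : ℕ))]
    · intro σ _ hστ
      have : ∃ j, σ j ≠ τ j := by
        by_contra h
        push_neg at h
        exact hστ (Equiv.ext h)
      obtain ⟨j, hj⟩ := this
      rw [Finset.prod_eq_zero (Finset.mem_univ j)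
        (hc _ _ (fun h => hj (Fin.val_injective h).symm)), mul_zero]
    · intro h
      exact absurd (Finset.mem_univ τ) h
  rw [Finset.sum_congr rfl fun τ _ => h1 τ, Finset.sum_const, Finset.card_univ,
    Fintype.card_perm, Fintype.card_fin, nsmul_eq_mul]

lemma key_sum (L N : ℕ) (c : ℕ → ℕ → ℂ) (hc : ∀ m m', m ≠ m' → c m m' = 0)
    (g : ℕ → Fin N → ℂ) :
    (∑ τ : Equiv.Perm (Fin L), ∑ σ : Equiv.Perm (Fin (L + N)),
      ((Equiv.Perm.sign τ : ℤ) : ℂ) * ((Equiv.Perm.sign σ : ℤ) : ℂ)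
        * (∏ j : Fin L, c (τ j) (σ (Fin.castAdd N j)))
        * ∏ i : Fin N, g (σ (Fin.natAdd L i)) i)
    = (L.factorial : ℂ) * (∏ j : Fin L, c (j : ℕ) (j : ℕ))
        * ∑ ρ : Equiv.Perm (Fin N),
            ((Equiv.Perm.sign ρ : ℤ) : ℂ) * ∏ i : Fin N, g (L + (ρ i : ℕ)) i := by
  have h1 : ∀ τ : Equiv.Perm (Fin L),
      (∑ σ : Equiv.Perm (Fin (L + N)),
        ((Equiv.Perm.sign τ : ℤ) : ℂ) * ((Equiv.Perm.sign σ : ℤ) : ℂ)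
          * (∏ j : Fin L, c (τ j) (σ (Fin.castAdd N j)))
          * ∏ i : Fin N, g (σ (Fin.natAdd L i)) i)
      = (∏ j : Fin L, c (j : ℕ) (j : ℕ))
          * ∑ ρ : Equiv.Perm (Fin N),
              ((Equiv.Perm.sign ρ : ℤ) : ℂ) * ∏ i : Fin N, g (L + (ρ i : ℕ)) i := by
    intro τ
    set Φ : Equiv.Perm (Fin N) → Equiv.Perm (Fin (L + N)) :=
      fun ρ => finSumFinEquiv.permCongr (Equiv.sumCongr τ ρ) with hΦ
    have hΦcast : ∀ ρ (j : Fin L), Φ ρ (Fin.castAdd N j) = Fin.castAdd N (τ j) := by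
      intro ρ j
      simp [hΦ, Equiv.permCongr_apply, finSumFinEquiv_symm_apply_castAdd]
    have hΦnat : ∀ ρ (i : Fin N), Φ ρ (Fin.natAdd L i) = Fin.natAdd L (ρ i) := by
      intro ρ i
      simp [hΦ, Equiv.permCongr_apply, finSumFinEquiv_symm_apply_natAdd]
    have hΦinj : Function.Injective Φ := by
      intro ρ₁ ρ₂ h
      ext i
      have := congrArg (fun σ : Equiv.Perm (Fin (L + N)) => σ (Fin.natAdd L i)) h
      simp only [hΦcast, hΦnat] at this
      have hv := congrArg Fin.val this
      simp only [Fin.coe_natAdd] at hv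
      omega
    have hvanish : ∀ σ : Equiv.Perm (Fin (L + N)),
        σ ∉ Finset.image Φ Finset.univ →
        ((Equiv.Perm.sign τ : ℤ) : ℂ) * ((Equiv.Perm.sign σ : ℤ) : ℂ)
          * (∏ j : Fin L, c (τ j) (σ (Fin.castAdd N j)))
          * (∏ i : Fin N, g (σ (Fin.natAdd L i)) i) = 0 := by
      intro σ hσ
      have : ∃ j : Fin L, σ (Fin.castAdd N j) ≠ Fin.castAdd N (τ j) := by
        by_contra h
        push_neg at h
        apply hσ
        have hmaps : Set.MapsTo (finSumFinEquiv.symm.permCongr σ)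
            (Set.range Sum.inl) (Set.range Sum.inl) := by
          rintro x ⟨j, rfl⟩
          refine ⟨τ j, ?_⟩
          simp [Equiv.permCongr_apply, Equiv.symm_symm, finSumFinEquiv_apply_left, h j,
            finSumFinEquiv_symm_apply_castAdd]
        obtain ⟨⟨τ₂, ρ⟩, hρ⟩ :=
          Equiv.Perm.mem_sumCongrHom_range_of_perm_mapsTo_inl hmaps
        have hτ₂ : τ₂ = τ := by
          ext j
          have := congrArg (fun σ' : Equiv.Perm (Fin L ⊕ Fin N) => σ' (Sum.inl j)) hρ
          simp only [Equiv.Perm.sumCongrHom_apply, Equiv.sumCongr_apply, Sum.map_inl,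
            Equiv.permCongr_apply, Equiv.symm_symm, finSumFinEquiv_apply_left,
            finSumFinEquiv_symm_apply_castAdd, h j] at this
          exact congrArg Fin.val (Sum.inl_injective this)
        rw [hτ₂] at hρ
        refine Finset.mem_image.mpr ⟨ρ, Finset.mem_univ ρ, ?_⟩
        have hback : finSumFinEquiv.permCongr (finSumFinEquiv.symm.permCongr σ) = σ := by
          ext a
          simp [Equiv.permCongr_apply]
        rw [hΦ, ← hback, ← hρ]
        rfl
      obtain ⟨j, hj⟩ := this
      have hval : (τ j : ℕ) ≠ ((σ (Fin.castAdd N j)) : ℕ) := by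
        intro h
        exact hj (Fin.val_injective h.symm)
      rw [Finset.prod_eq_zero (Finset.mem_univ j) (hc _ _ hval), mul_zero, zero_mul]
    rw [← Finset.sum_subset (Finset.subset_univ (Finset.image Φ Finset.univ))
      (fun σ _ hσ => hvanish σ hσ), Finset.sum_image (fun ρ₁ _ ρ₂ _ h => hΦinj h)]
    have hterm : ∀ ρ : Equiv.Perm (Fin N),
        ((Equiv.Perm.sign τ : ℤ) : ℂ) * ((Equiv.Perm.sign (Φ ρ) : ℤ) : ℂ)
          * (∏ j : Fin L, c (τ j) ((Φ ρ) (Fin.castAdd N j)))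
          * (∏ i : Fin N, g ((Φ ρ) (Fin.natAdd L i)) i)
        = (∏ j : Fin L, c (j : ℕ) (j : ℕ))
            * (((Equiv.Perm.sign ρ : ℤ) : ℂ) * ∏ i : Fin N, g (L + (ρ i : ℕ)) i) := by
      intro ρ
      have hsign : Equiv.Perm.sign (Φ ρ) = Equiv.Perm.sign τ * Equiv.Perm.sign ρ := by
        rw [hΦ]
        simp [Equiv.Perm.sign_permCongr, Equiv.Perm.sign_sumCongr]
      have hc1 : (∏ j : Fin L, c (τ j) ((Φ ρ) (Fin.castAdd N j)))
          = ∏ j : Fin L, c (j : ℕ) (j : ℕ) := by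
        rw [Finset.prod_congr rfl fun j _ => by rw [hΦcast ρ j, Fin.coe_castAdd]]
        exact Equiv.prod_comp τ (fun m : Fin L => c (m : ℕ) (m : ℕ))
      have hg1 : (∏ i : Fin N, g ((Φ ρ) (Fin.natAdd L i)) i)
          = ∏ i : Fin N, g (L + (ρ i : ℕ)) i :=
        Finset.prod_congr rfl fun i _ => by rw [hΦnat ρ i, Fin.coe_natAdd]
      rw [hsign, hc1, hg1]
      have : ((Equiv.Perm.sign τ : ℤ) : ℂ) * (((Equiv.Perm.sign τ * Equiv.Perm.sign ρ : ℤˣ) : ℤ) : ℂ)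
          = ((Equiv.Perm.sign ρ : ℤ) : ℂ) := by
        rcases Int.units_eq_one_or (Equiv.Perm.sign τ) with h | h <;>
          rcases Int.units_eq_one_or (Equiv.Perm.sign ρ) with h' | h' <;>
            rw [h, h'] <;> norm_num
      rw [Units.val_mul, Int.cast_mul]
      rcases Int.units_eq_one_or (Equiv.Perm.sign τ) with h | h <;> rw [h] <;>
        simp <;> ring
    rw [Finset.sum_congr rfl fun ρ _ => hterm ρ, ← Finset.mul_sum]
  rw [Finset.sum_congr rfl fun τ _ => h1 τ, Finset.sum_const, Finset.card_univ,
    Fintype.card_perm, Fintype.card_fin, nsmul_eq_mul, mul_assoc]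





lemma det_expand {n : ℕ} {R : Type*} [CommRing R] (q : ℕ → Polynomial R)
    (hm : ∀ m, (q m).Monic) (hd : ∀ m, (q m).natDegree = m) (v : Fin n → R) :
    (∏ j : Fin n, ∏ k ∈ Finset.Ioi j, (v k - v j))
      = ∑ σ : Equiv.Perm (Fin n),
          ((Equiv.Perm.sign σ : ℤ) : R) * ∏ a : Fin n, (q (σ a : ℕ)).eval (v a) := by
  rw [← Matrix.det_vandermonde v,
    Matrix.det_eval_matrixOfPolynomials_eq_det_vandermonde v (fun i => q (i : ℕ))
      (fun i => hd i) (fun i => hm i),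
    ← Matrix.det_transpose, Matrix.det_apply']
  refine Finset.sum_congr rfl fun σ _ => ?_
  congr 1

lemma integrable_poly (μ : Measure ℝ) (hmom : ∀ k : ℕ, Integrable (fun x : ℝ => x ^ k) μ)
    (P : Polynomial ℝ) : Integrable (fun x => P.eval x) μ := by
  have h : (fun x : ℝ => P.eval x)
      = fun x => ∑ n ∈ Finset.range (P.natDegree + 1), P.coeff n * x ^ n :=
    funext fun x => Polynomial.eval_eq_sum_range x
  rw [h]
  exact integrable_finset_sum _ (fun n _ => (hmom n).const_mul _)

lemma integrable_poly_mul (μ : Measure ℝ) (hmom : ∀ k : ℕ, Integrable (fun x : ℝ => x ^ k) μ)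
    (P Q : Polynomial ℝ) : Integrable (fun x => P.eval x * Q.eval x) μ := by
  simpa [Polynomial.eval_mul] using integrable_poly μ hmom (P * Q)

lemma my_integrable_prod {𝕜 : Type*} [RCLike 𝕜] {α : Type*} [MeasurableSpace α]
    (μ : Measure α) [SigmaFinite μ] {ι : Type*} [Fintype ι] (f : ι → α → 𝕜)
    (hf : ∀ i, Integrable (f i) μ) :
    Integrable (fun x : ι → α => ∏ i, f i (x i)) (Measure.pi fun _ => μ) := by
  letI : MeasureSpace α := ⟨μ⟩
  haveI : SigmaFinite (volume : Measure α) := ‹SigmaFinite μ›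
  exact MeasureTheory.Integrable.fintype_prod hf

lemma my_integral_prod {𝕜 : Type*} [RCLike 𝕜] {α : Type*} [MeasurableSpace α]
    (μ : Measure α) [SigmaFinite μ] {ι : Type*} [Fintype ι] (f : ι → α → 𝕜) :
    ∫ x : ι → α, ∏ i, f i (x i) ∂(Measure.pi fun _ => μ) = ∏ i, ∫ x, f i x ∂μ := by
  letI : MeasureSpace α := ⟨μ⟩
  haveI : SigmaFinite (volume : Measure α) := ‹SigmaFinite μ›
  exact MeasureTheory.integral_fintype_prod_eq_prod f

lemma Z_eq (L : ℕ) (μ : Measure ℝ) [SigmaFinite μ]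
    (hmom : ∀ k : ℕ, Integrable (fun x : ℝ => x ^ k) μ)
    (p : ℕ → Polynomial ℝ) (hmonic : ∀ m, (p m).Monic) (hdeg : ∀ m, (p m).natDegree = m)
    (horth : ∀ m m', m ≠ m' → ∫ x : ℝ, (p m).eval x * (p m').eval x ∂μ = 0) :
    (∫ x : Fin L → ℝ, (∏ j : Fin L, ∏ k ∈ Finset.Ioi j, (x k - x j)) ^ 2
        ∂(Measure.pi fun _ : Fin L => μ))
      = (L.factorial : ℝ)
          * ∏ j : Fin L, ∫ t : ℝ, (p (j : ℕ)).eval t * (p (j : ℕ)).eval t ∂μ := by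
  have expand : (fun x : Fin L → ℝ => (∏ j : Fin L, ∏ k ∈ Finset.Ioi j, (x k - x j)) ^ 2)
      = fun x => ∑ τ : Equiv.Perm (Fin L), ∑ σ : Equiv.Perm (Fin L),
          (((Equiv.Perm.sign τ : ℤ) : ℝ) * ((Equiv.Perm.sign σ : ℤ) : ℝ))
            * ∏ j : Fin L, (p ((τ j : ℕ))).eval (x j) * (p ((σ j : ℕ))).eval (x j) := by
    funext x
    rw [sq, det_expand p hmonic hdeg x, Finset.sum_mul_sum]
    refine Finset.sum_congr rfl fun τ _ => Finset.sum_congr rfl fun σ _ => ?_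
    rw [mul_mul_mul_comm, ← Finset.prod_mul_distrib]
  have hGint : ∀ τ σ : Equiv.Perm (Fin L),
      Integrable (fun x : Fin L → ℝ =>
        ∏ j : Fin L, (p ((τ j : ℕ))).eval (x j) * (p ((σ j : ℕ))).eval (x j))
        (Measure.pi fun _ : Fin L => μ) :=
    fun τ σ => my_integrable_prod μ _ (fun j => integrable_poly_mul μ hmom _ _)
  rw [expand, integral_finset_sum _ (fun τ _ =>
    integrable_finset_sum _ (fun σ _ => (hGint τ σ).const_mul _))]
  have h2 : ∀ τ : Equiv.Perm (Fin L),
      (∫ x : Fin L → ℝ, ∑ σ : Equiv.Perm (Fin L),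
        (((Equiv.Perm.sign τ : ℤ) : ℝ) * ((Equiv.Perm.sign σ : ℤ) : ℝ))
          * ∏ j : Fin L, (p ((τ j : ℕ))).eval (x j) * (p ((σ j : ℕ))).eval (x j)
        ∂(Measure.pi fun _ : Fin L => μ))
      = ∑ σ : Equiv.Perm (Fin L),
          ((Equiv.Perm.sign τ : ℤ) : ℝ) * ((Equiv.Perm.sign σ : ℤ) : ℝ)
            * ∏ j : Fin L, ∫ t : ℝ, (p ((τ j : ℕ))).eval t * (p ((σ j : ℕ))).eval t ∂μ := by
    intro τ
    rw [integral_finset_sum _ (fun σ _ => (hGint τ σ).const_mul _)]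
    refine Finset.sum_congr rfl fun σ _ => ?_
    rw [integral_const_mul, my_integral_prod μ
      (fun j => fun t => (p ((τ j : ℕ))).eval t * (p ((σ j : ℕ))).eval t)]
  rw [Finset.sum_congr rfl fun τ _ => h2 τ]
  exact key_sum0 L (fun m m' => ∫ t : ℝ, (p m).eval t * (p m').eval t ∂μ) horth

lemma integral_complex_ofReal {α : Type*} [MeasurableSpace α] {μ : Measure α} (f : α → ℝ) :
    ∫ x, ((f x : ℝ) : ℂ) ∂μ = ((∫ x, f x ∂μ : ℝ) : ℂ) := integral_ofReal

lemma num_eq (L N : ℕ) (μ : Measure ℝ) [SigmaFinite μ]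
    (hmom : ∀ k : ℕ, Integrable (fun x : ℝ => x ^ k) μ)
    (p : ℕ → Polynomial ℝ) (hmonic : ∀ m, (p m).Monic) (hdeg : ∀ m, (p m).natDegree = m)
    (horth : ∀ m m', m ≠ m' → ∫ x : ℝ, (p m).eval x * (p m').eval x ∂μ = 0)
    (u : Fin N → ℂ) :
    (∫ x : Fin L → ℝ,
        ((∏ j : Fin L, ∏ k ∈ Finset.Ioi j, (x k - x j) : ℝ) : ℂ)
          * ∏ j : Fin (L + N), ∏ k ∈ Finset.Ioi j,
              (Fin.append (fun a : Fin L => ((x a : ℝ) : ℂ)) u k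
                - Fin.append (fun a : Fin L => ((x a : ℝ) : ℂ)) u j)
        ∂(Measure.pi fun _ : Fin L => μ))
      = (L.factorial : ℂ)
          * (∏ j : Fin L, ((∫ t : ℝ, (p (j : ℕ)).eval t * (p (j : ℕ)).eval t ∂μ : ℝ) : ℂ))
          * (Matrix.of fun j k : Fin N =>
              ((p (L + (k : ℕ))).map (algebraMap ℝ ℂ)).eval (u j)).det := by
  set q : ℕ → Polynomial ℂ := fun m => (p m).map (algebraMap ℝ ℂ) with hq
  have qmonic : ∀ m, (q m).Monic := fun m => (hmonic m).map _
  have qdeg : ∀ m, (q m).natDegree = m := fun m => by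
    rw [hq, (hmonic m).natDegree_map, hdeg]
  have qeval : ∀ m (t : ℝ), (q m).eval ((t : ℂ)) = (((p m).eval t : ℝ) : ℂ) := by
    intro m t
    rw [hq, show ((t : ℝ) : ℂ) = algebraMap ℝ ℂ t from rfl, Polynomial.eval_map,
      Polynomial.eval₂_at_apply]
    rfl
  set K : Equiv.Perm (Fin (L + N)) → ℂ :=
    fun σ => ∏ i : Fin N, (q ((σ (Fin.natAdd L i) : ℕ))).eval (u i) with hK
  have expand : (fun x : Fin L → ℝ =>
      ((∏ j : Fin L, ∏ k ∈ Finset.Ioi j, (x k - x j) : ℝ) : ℂ)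
        * ∏ j : Fin (L + N), ∏ k ∈ Finset.Ioi j,
            (Fin.append (fun a : Fin L => ((x a : ℝ) : ℂ)) u k
              - Fin.append (fun a : Fin L => ((x a : ℝ) : ℂ)) u j))
      = fun x => ∑ τ : Equiv.Perm (Fin L), ∑ σ : Equiv.Perm (Fin (L + N)),
          (((Equiv.Perm.sign τ : ℤ) : ℂ) * ((Equiv.Perm.sign σ : ℤ) : ℂ) * K σ)
            * ∏ j : Fin L,
                (((p ((τ j : ℕ))).eval (x j)
                  * (p ((σ (Fin.castAdd N j) : ℕ))).eval (x j) : ℝ) : ℂ) := by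
    funext x
    have e1 : ((∏ j : Fin L, ∏ k ∈ Finset.Ioi j, (x k - x j) : ℝ) : ℂ)
        = ∑ τ : Equiv.Perm (Fin L), ((Equiv.Perm.sign τ : ℤ) : ℂ)
            * ∏ j : Fin L, (((p ((τ j : ℕ))).eval (x j) : ℝ) : ℂ) := by
      rw [det_expand p hmonic hdeg x]
      push_cast
      rfl
    have e2 : (∏ j : Fin (L + N), ∏ k ∈ Finset.Ioi j,
          (Fin.append (fun a : Fin L => ((x a : ℝ) : ℂ)) u k
            - Fin.append (fun a : Fin L => ((x a : ℝ) : ℂ)) u j))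
        = ∑ σ : Equiv.Perm (Fin (L + N)), ((Equiv.Perm.sign σ : ℤ) : ℂ)
            * ((∏ j : Fin L, (((p ((σ (Fin.castAdd N j) : ℕ))).eval (x j) : ℝ) : ℂ)) * K σ) := by
      rw [det_expand q qmonic qdeg]
      refine Finset.sum_congr rfl fun σ _ => ?_
      rw [Fin.prod_univ_add]
      congr 1
      congr 1
      · refine Finset.prod_congr rfl fun j _ => ?_
        rw [Fin.append_left, qeval]
      · refine Finset.prod_congr rfl fun i _ => ?_
        rw [Fin.append_right]
    rw [e1, e2, Finset.sum_mul_sum]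
    refine Finset.sum_congr rfl fun τ _ => Finset.sum_congr rfl fun σ _ => ?_
    rw [show ∀ a b c d e : ℂ, (a * b) * (c * (d * e)) = (a * c * e) * (b * d) from
      fun a b c d e => by ring, ← Finset.prod_mul_distrib]
    congr 1
    refine Finset.prod_congr rfl fun j _ => ?_
    push_cast
    ring
  have hGint : ∀ (τ : Equiv.Perm (Fin L)) (σ : Equiv.Perm (Fin (L + N))),
      Integrable (fun x : Fin L → ℝ =>
        ∏ j : Fin L, (((p ((τ j : ℕ))).eval (x j)
          * (p ((σ (Fin.castAdd N j) : ℕ))).eval (x j) : ℝ) : ℂ))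
        (Measure.pi fun _ : Fin L => μ) :=
    fun τ σ => my_integrable_prod μ _ (fun j => (integrable_poly_mul μ hmom _ _).ofReal)
  rw [expand, integral_finset_sum _ (fun τ _ =>
    integrable_finset_sum _ (fun σ _ => (hGint τ σ).const_mul _))]
  have h2 : ∀ τ : Equiv.Perm (Fin L),
      (∫ x : Fin L → ℝ, ∑ σ : Equiv.Perm (Fin (L + N)),
        (((Equiv.Perm.sign τ : ℤ) : ℂ) * ((Equiv.Perm.sign σ : ℤ) : ℂ) * K σ)
          * ∏ j : Fin L,
              (((p ((τ j : ℕ))).eval (x j)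
                * (p ((σ (Fin.castAdd N j) : ℕ))).eval (x j) : ℝ) : ℂ)
        ∂(Measure.pi fun _ : Fin L => μ))
      = ∑ σ : Equiv.Perm (Fin (L + N)),
          ((Equiv.Perm.sign τ : ℤ) : ℂ) * ((Equiv.Perm.sign σ : ℤ) : ℂ)
            * (∏ j : Fin L, ((∫ t : ℝ, (p ((τ j : ℕ))).eval t
                * (p ((σ (Fin.castAdd N j) : ℕ))).eval t ∂μ : ℝ) : ℂ))
            * ∏ i : Fin N, (q ((σ (Fin.natAdd L i) : ℕ))).eval (u i) := by
    intro τ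
    rw [integral_finset_sum _ (fun σ _ => (hGint τ σ).const_mul _)]
    refine Finset.sum_congr rfl fun σ _ => ?_
    rw [integral_const_mul, my_integral_prod μ
      (fun j => fun t : ℝ => (((p ((τ j : ℕ))).eval t
        * (p ((σ (Fin.castAdd N j) : ℕ))).eval t : ℝ) : ℂ))]
    simp only [integral_complex_ofReal, hK]
    ring
  rw [Finset.sum_congr rfl fun τ _ => h2 τ,
    key_sum L N (fun m m' => ((∫ t : ℝ, (p m).eval t * (p m').eval t ∂μ : ℝ) : ℂ))
      (fun m m' h => by
        show ((∫ t : ℝ, (p m).eval t * (p m').eval t ∂μ : ℝ) : ℂ) = 0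
        rw [horth m m' h]; exact Complex.ofReal_zero)
      (fun m i => (q m).eval (u i))]
  congr 1
  rw [← Matrix.det_transpose, Matrix.det_apply']
  refine Finset.sum_congr rfl fun ρ _ => ?_
  congr 1

end CharPolyAux

open CharPolyAux

/-- Expectation of products of characteristic polynomials in an orthogonal polynomial
ensemble: with respect to the probability measure on `ℝ^L` proportional to
`Δ²(x) dμ(x₁)⋯dμ(x_L)`, the expectation of `∏_{i=1}^N ∏_{j=1}^L (u_i − x_j)` equals
`det(π_{L+k−1}(u_j))_{j,k=1}^N / Δ(u)`, where `π_m` are the monic orthogonal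
polynomials of `μ`. -/
theorem char_poly_expectation (L N : ℕ) (hL : 0 < L) (hN : 0 < N)
    (μ : Measure ℝ) (hmom : ∀ k : ℕ, Integrable (fun x : ℝ => x ^ k) μ)
    (p : ℕ → Polynomial ℝ)
    (hmonic : ∀ m, (p m).Monic) (hdeg : ∀ m, (p m).natDegree = m)
    (horth : ∀ m m', m ≠ m' → ∫ x : ℝ, (p m).eval x * (p m').eval x ∂μ = 0)
    (u : Fin N → ℂ) (hu : Function.Injective u)
    (hZint : Integrable
      (fun x : Fin L → ℝ => (∏ j : Fin L, ∏ k ∈ Finset.Ioi j, (x k - x j)) ^ 2)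
      (Measure.pi fun _ : Fin L => μ))
    (hZpos : 0 < ∫ x : Fin L → ℝ,
      (∏ j : Fin L, ∏ k ∈ Finset.Ioi j, (x k - x j)) ^ 2 ∂(Measure.pi fun _ : Fin L => μ))
    (hint : Integrable
      (fun x : Fin L → ℝ => (∏ i : Fin N, ∏ j : Fin L, (u i - (x j : ℂ))) *
        ((∏ j : Fin L, ∏ k ∈ Finset.Ioi j, (x k - x j) : ℝ) : ℂ) ^ 2)
      (Measure.pi fun _ : Fin L => μ)) :
    (∫ x : Fin L → ℝ, (∏ i : Fin N, ∏ j : Fin L, (u i - (x j : ℂ))) *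
        ((∏ j : Fin L, ∏ k ∈ Finset.Ioi j, (x k - x j) : ℝ) : ℂ) ^ 2
        ∂(Measure.pi fun _ : Fin L => μ)) /
      ((∫ x : Fin L → ℝ,
        (∏ j : Fin L, ∏ k ∈ Finset.Ioi j, (x k - x j)) ^ 2
        ∂(Measure.pi fun _ : Fin L => μ) : ℝ) : ℂ) =
    Matrix.det (Matrix.of fun j k : Fin N =>
        Polynomial.aeval (u j) (p (L + (k : ℕ)))) /
      (∏ j : Fin N, ∏ k ∈ Finset.Ioi j, (u k - u j)) := by
  classical
  haveI : IsFiniteMeasure μ := by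
    have hone : Integrable (fun _ : ℝ => (1 : ℝ)) μ := by simpa using hmom 0
    exact (integrable_const_iff.mp hone).resolve_left one_ne_zero
  have hΔu0 : (∏ j : Fin N, ∏ k ∈ Finset.Ioi j, (u k - u j)) ≠ 0 := by
    refine Finset.prod_ne_zero_iff.mpr fun j _ => Finset.prod_ne_zero_iff.mpr fun k hk => ?_
    refine sub_ne_zero.mpr fun h => ?_
    have hkj := hu h
    rw [hkj] at hk
    exact lt_irrefl _ (Finset.mem_Ioi.mp hk)
  have hZ0 : ((∫ x : Fin L → ℝ,
      (∏ j : Fin L, ∏ k ∈ Finset.Ioi j, (x k - x j)) ^ 2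
      ∂(Measure.pi fun _ : Fin L => μ) : ℝ) : ℂ) ≠ 0 :=
    Complex.ofReal_ne_zero.mpr (ne_of_gt hZpos)
  have hdetM : (Matrix.of fun j k : Fin N =>
        ((p (L + (k : ℕ))).map (algebraMap ℝ ℂ)).eval (u j)).det
      = (Matrix.of fun j k : Fin N => Polynomial.aeval (u j) (p (L + (k : ℕ)))).det := by
    congr 1
    ext j k
    rw [Matrix.of_apply, Matrix.of_apply, Polynomial.aeval_def, Polynomial.eval₂_eq_eval_map]
  have hpoint : (fun x : Fin L → ℝ =>
      (∏ j : Fin N, ∏ k ∈ Finset.Ioi j, (u k - u j)) *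
        ((∏ i : Fin N, ∏ j : Fin L, (u i - (x j : ℂ))) *
          ((∏ j : Fin L, ∏ k ∈ Finset.Ioi j, (x k - x j) : ℝ) : ℂ) ^ 2))
      = fun x : Fin L → ℝ =>
        ((∏ j : Fin L, ∏ k ∈ Finset.Ioi j, (x k - x j) : ℝ) : ℂ)
          * ∏ j : Fin (L + N), ∏ k ∈ Finset.Ioi j,
              (Fin.append (fun a : Fin L => ((x a : ℝ) : ℂ)) u k
                - Fin.append (fun a : Fin L => ((x a : ℝ) : ℂ)) u j) := by
    funext x
    rw [vandermonde_split L N (fun a : Fin L => ((x a : ℝ) : ℂ)) u]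
    push_cast
    ring
  have key : (∏ j : Fin N, ∏ k ∈ Finset.Ioi j, (u k - u j)) *
      (∫ x : Fin L → ℝ, (∏ i : Fin N, ∏ j : Fin L, (u i - (x j : ℂ))) *
        ((∏ j : Fin L, ∏ k ∈ Finset.Ioi j, (x k - x j) : ℝ) : ℂ) ^ 2
        ∂(Measure.pi fun _ : Fin L => μ))
      = ((∫ x : Fin L → ℝ,
            (∏ j : Fin L, ∏ k ∈ Finset.Ioi j, (x k - x j)) ^ 2
            ∂(Measure.pi fun _ : Fin L => μ) : ℝ) : ℂ)
          * (Matrix.of fun j k : Fin N => Polynomial.aeval (u j) (p (L + (k : ℕ)))).det := by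
    rw [← integral_const_mul, hpoint, num_eq L N μ hmom p hmonic hdeg horth u,
      Z_eq L μ hmom p hmonic hdeg horth, hdetM]
    push_cast
    ring
  rw [div_eq_div_iff hZ0 hΔu0]
  linear_combination key
end

section
/- The symmetrized multi-point expression S_n is regular on the diagonal for n = 2: if R(z) = E₁₁ + Σ_{k≥1} R_k z^{−k} is a formal matrix power series with R(z)² = R(z) (as formal series), then tr(R(z₁)R(z₂))/(z₁−z₂)² − 1/(z₁−z₂)² is a well-defined formal power series in z₁^{−1}, z₂^{−1}, i.e., tr(R(z₁)R(z₂)) − 1 vanishes to second order on the diagonal z₁ = z₂. -/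
open Finset

namespace S2aux

noncomputable def g1 (c : ℕ → ℕ → ℂ) (a b : ℕ) : ℂ :=
  ∑ i ∈ Finset.range (b + 1), c (a + 1 + i) (b - i)

lemma antisym (c : ℕ → ℕ → ℂ) (hsym : ∀ n m, c n m = c m n)
    (hdiag : ∀ N, ∑ k ∈ Finset.range (N + 1), c k (N - k) = 0) (a b : ℕ) :
    g1 c a b + g1 c b a = 0 := by
  have h := hdiag (a + b + 1)
  have hsplit : ∑ k ∈ Finset.range (a + b + 1 + 1), c k (a + b + 1 - k)
      = ∑ k ∈ Finset.range (a + 1), c k (a + b + 1 - k)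
        + ∑ i ∈ Finset.range (b + 1), c (a + 1 + i) (a + b + 1 - (a + 1 + i)) := by
    have : a + b + 1 + 1 = (a + 1) + (b + 1) := by ring
    rw [this, Finset.sum_range_add]
  have h1 : ∑ i ∈ Finset.range (b + 1), c (a + 1 + i) (a + b + 1 - (a + 1 + i)) = g1 c a b := by
    apply Finset.sum_congr rfl
    intro i hi
    simp only [Finset.mem_range] at hi
    congr 1
    omega
  have h2 : ∑ k ∈ Finset.range (a + 1), c k (a + b + 1 - k) = g1 c b a := by
    rw [show g1 c b a = ∑ j ∈ Finset.range (a + 1), c (b + 1 + j) (a - j) from rfl]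
    rw [← Finset.sum_range_reflect (fun j => c (b + 1 + j) (a - j)) (a + 1)]
    apply Finset.sum_congr rfl
    intro k hk
    simp only [Finset.mem_range] at hk
    rw [hsym]
    congr 1 <;> omega
  rw [hsplit, h1, h2] at h
  linear_combination h

lemma diag_g1 (c : ℕ → ℕ → ℂ) (hsym : ∀ n m, c n m = c m n)
    (hdiag : ∀ N, ∑ k ∈ Finset.range (N + 1), c k (N - k) = 0) (N : ℕ) :
    ∑ k ∈ Finset.range (N + 1), g1 c k (N - k) = 0 := by
  have hrefl : ∑ k ∈ Finset.range (N + 1), g1 c k (N - k)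
      = ∑ k ∈ Finset.range (N + 1), g1 c (N - k) k := by
    rw [← Finset.sum_range_reflect]
    apply Finset.sum_congr rfl
    intro k hk
    simp only [Finset.mem_range] at hk
    congr 1 <;> omega
  have h2 : ∑ k ∈ Finset.range (N + 1), (g1 c k (N - k) + g1 c (N - k) k) = 0 := by
    apply Finset.sum_eq_zero
    intro k _
    exact antisym c hsym hdiag k (N - k)
  rw [Finset.sum_add_distrib, ← hrefl] at h2
  exact add_self_eq_zero.mp h2

noncomputable def G1 (c : ℕ → ℕ → ℂ) : MvPowerSeries (Fin 2) ℂ :=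
  fun e => g1 c (e 0) (e 1)

lemma coeff_G1 (c : ℕ → ℕ → ℂ) (d : Fin 2 →₀ ℕ) :
    MvPowerSeries.coeff d (G1 c) = g1 c (d 0) (d 1) := rfl

lemma key (c : ℕ → ℕ → ℂ)
    (hdiag : ∀ N, ∑ k ∈ Finset.range (N + 1), c k (N - k) = 0) (d : Fin 2 →₀ ℕ) :
    MvPowerSeries.coeff d ((MvPowerSeries.X 0 - MvPowerSeries.X 1) *
      G1 c) = c (d 0) (d 1) := by
  rw [sub_mul, map_sub, MvPowerSeries.X_def, MvPowerSeries.X_def]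
  simp only [MvPowerSeries.coeff_monomial_mul]
  have hle0 : (Finsupp.single (0 : Fin 2) 1 ≤ d) ↔ 1 ≤ d 0 := Finsupp.single_le_iff
  have hle1 : (Finsupp.single (1 : Fin 2) 1 ≤ d) ↔ 1 ≤ d 1 := Finsupp.single_le_iff
  set n := d 0 with hn
  set m := d 1 with hm
  have e00 : (d - Finsupp.single (0 : Fin 2) 1 : Fin 2 →₀ ℕ) 0 = n - 1 := by
    rw [Finsupp.tsub_apply]; simp [hn, hm]
  have e01 : (d - Finsupp.single (0 : Fin 2) 1 : Fin 2 →₀ ℕ) 1 = m := by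
    rw [Finsupp.tsub_apply]; simp [hn, hm]
  have e10 : (d - Finsupp.single (1 : Fin 2) 1 : Fin 2 →₀ ℕ) 0 = n := by
    rw [Finsupp.tsub_apply]; simp [hn, hm]
  have e11 : (d - Finsupp.single (1 : Fin 2) 1 : Fin 2 →₀ ℕ) 1 = m - 1 := by
    rw [Finsupp.tsub_apply]; simp [hn, hm]
  simp only [coeff_G1, e00, e01, e10, e11]
  simp only [hle0, hle1, one_mul]
  rcases Nat.eq_zero_or_pos n with hn0 | hn1
  · rcases Nat.eq_zero_or_pos m with hm0 | hm1
    · rw [if_neg (by omega), if_neg (by omega), hn0, hm0]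
      have h0 : c 0 0 = 0 := by simpa using hdiag 0
      simp [h0]
    · rw [if_neg (by omega), if_pos (by omega), hn0]
      have h := hdiag m
      rw [Finset.sum_range_succ'] at h
      have hg : g1 c 0 (m - 1) = ∑ i ∈ Finset.range m, c (i + 1) (m - (i + 1)) := by
        unfold g1
        rw [show m - 1 + 1 = m from by omega]
        apply Finset.sum_congr rfl
        intro i hi
        simp only [Finset.mem_range] at hi
        congr 1 <;> omega
      rw [hg]
      simp only [Nat.sub_zero] at h
      linear_combination -h
  · rcases Nat.eq_zero_or_pos m with hm0 | hm1
    · rw [if_pos (by omega), if_neg (by omega), hm0]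
      unfold g1
      simp [show n - 1 + 1 = n from by omega]
    · rw [if_pos (by omega), if_pos (by omega)]
      have hg : g1 c (n - 1) m = c n m + g1 c n (m - 1) := by
        unfold g1
        rw [Finset.sum_range_succ']
        have h1 : ∑ i ∈ Finset.range m, c (n - 1 + 1 + (i + 1)) (m - (i + 1))
            = ∑ i ∈ Finset.range (m - 1 + 1), c (n + 1 + i) (m - 1 - i) := by
          rw [show m - 1 + 1 = m from by omega]
          apply Finset.sum_congr rfl
          intro i hi
          congr 1 <;> omega
        rw [h1, show n - 1 + 1 + 0 = n from by omega, show m - 0 = m from rfl]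
        ring
      rw [hg]; ring

end S2aux

/-- Diagonal regularity of `S₂`: if `R(z) = E₁₁ + Σ_{k≥1} R_k z^{−k}` is a 2×2-matrix
formal series with `R(z)² = R(z)` and `tr R(z) = 1`, then `tr(R(z₁)R(z₂)) − 1` vanishes
to second order on the diagonal: writing `u = z₁⁻¹`, `v = z₂⁻¹`, the formal power series
with coefficients `tr(R_n R_m)` minus `1` is divisible by `(u − v)²` in `ℂ[[u,v]]`. -/
theorem S2_diagonal_regularity (R : ℕ → Matrix (Fin 2) (Fin 2) ℂ)
    (h0 : R 0 = !![1, 0; 0, 0])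
    (hproj : ∀ n : ℕ, ∑ k ∈ Finset.range (n + 1), R k * R (n - k) = R n)
    (htr : ∀ n : ℕ, Matrix.trace (R n) = if n = 0 then 1 else 0) :
    ∃ G : MvPowerSeries (Fin 2) ℂ, ∀ d : Fin 2 →₀ ℕ,
      MvPowerSeries.coeff d
          ((MvPowerSeries.X 0 - MvPowerSeries.X 1) ^ 2 * G) =
        Matrix.trace (R (d 0) * R (d 1)) - if d = 0 then 1 else 0 := by
  classical
  set c : ℕ → ℕ → ℂ := fun n m =>
    Matrix.trace (R n * R m) - if n = 0 ∧ m = 0 then 1 else 0 with hc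
  have hsym : ∀ n m, c n m = c m n := by
    intro n m
    show Matrix.trace (R n * R m) - (if n = 0 ∧ m = 0 then (1:ℂ) else 0)
        = Matrix.trace (R m * R n) - (if m = 0 ∧ n = 0 then (1:ℂ) else 0)
    rw [Matrix.trace_mul_comm]
    congr 1
    by_cases h : n = 0 ∧ m = 0
    · rw [if_pos h, if_pos ⟨h.2, h.1⟩]
    · rw [if_neg h, if_neg (fun h' => h ⟨h'.2, h'.1⟩)]
  have hdiag : ∀ N, ∑ k ∈ Finset.range (N + 1), c k (N - k) = 0 := by
    intro N
    show ∑ k ∈ Finset.range (N + 1),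
        (Matrix.trace (R k * R (N - k)) - if k = 0 ∧ N - k = 0 then (1:ℂ) else 0) = 0
    rw [Finset.sum_sub_distrib]
    have h1 : ∑ k ∈ Finset.range (N + 1), Matrix.trace (R k * R (N - k))
        = Matrix.trace (R N) := by
      rw [← Matrix.trace_sum, hproj]
    have h2 : ∑ k ∈ Finset.range (N + 1), (if k = 0 ∧ N - k = 0 then (1 : ℂ) else 0)
        = if N = 0 then 1 else 0 := by
      rcases Nat.eq_zero_or_pos N with hN | hN
      · subst hN; simp
      · rw [if_neg (by omega)]
        apply Finset.sum_eq_zero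
        intro k hk
        rw [if_neg (by omega)]
    rw [h1, h2, htr, sub_self]
  refine ⟨S2aux.G1 (S2aux.g1 c), fun d => ?_⟩
  have hpow : (MvPowerSeries.X 0 - MvPowerSeries.X 1 : MvPowerSeries (Fin 2) ℂ) ^ 2
        * S2aux.G1 (S2aux.g1 c)
      = (MvPowerSeries.X 0 - MvPowerSeries.X 1)
        * ((MvPowerSeries.X 0 - MvPowerSeries.X 1) * S2aux.G1 (S2aux.g1 c)) := by
    ring
  have hmid : (MvPowerSeries.X 0 - MvPowerSeries.X 1) * S2aux.G1 (S2aux.g1 c)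
      = S2aux.G1 c := by
    apply MvPowerSeries.ext
    intro e
    rw [S2aux.key (S2aux.g1 c) (S2aux.diag_g1 c hsym hdiag) e, S2aux.coeff_G1]
  rw [hpow, hmid, S2aux.key c hdiag d]
  have hiff : (d = 0) ↔ (d 0 = 0 ∧ d 1 = 0) := by
    constructor
    · intro h; simp [h]
    · rintro ⟨h1, h2⟩
      ext i
      fin_cases i <;> simpa
  have hcd : c (d 0) (d 1)
      = Matrix.trace (R (d 0) * R (d 1)) - if (d 0 = 0 ∧ d 1 = 0) then 1 else 0 := rfl
  rw [hcd]
  by_cases hd : d = 0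
  · rw [if_pos hd, if_pos (hiff.mp hd)]
  · rw [if_neg hd, if_neg (fun h => hd (hiff.mpr h))]
end
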